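/- Let z₁, z₂ > 0 and define F_{z₁,z₂}(r) = arcosh(1 + (r² + (z₁ − z₂)²)/(2·z₁·z₂)). Then for every γ ≥ 1 and every r ≥ 0, F_{z₁,z₂}(γ·r) ≤ γ·F_{z₁,z₂}(r). -/

import Mathlib

/-- The inverse hyperbolic cosine. -/
noncomputable def arcosh (x : ℝ) : ℝ := Real.log (x + Real.sqrt (x ^ 2 - 1))

/-- The hyperbolic distance, in the Poincaré half-space model, between two points
with heights `z₁, z₂` whose horizontal coordinates are at Euclidean distance `r`. -/
noncomputable def F (z₁ z₂ r : ℝ) : ℝ :=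
  arcosh (1 + (r ^ 2 + (z₁ - z₂) ^ 2) / (2 * z₁ * z₂))

lemma arcosh_nonneg {x : ℝ} (hx : 1 ≤ x) : 0 ≤ arcosh x := by
  apply Real.log_nonneg
  have := Real.sqrt_nonneg (x ^ 2 - 1)
  linarith

lemma cosh_arcosh {x : ℝ} (hx : 1 ≤ x) : Real.cosh (arcosh x) = x := by
  have hx2 : (0:ℝ) ≤ x ^ 2 - 1 := by nlinarith
  have hs : Real.sqrt (x ^ 2 - 1) ^ 2 = x ^ 2 - 1 := Real.sq_sqrt hx2
  have hsn : 0 ≤ Real.sqrt (x ^ 2 - 1) := Real.sqrt_nonneg _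
  have hpos : 0 < x + Real.sqrt (x ^ 2 - 1) := by linarith
  rw [arcosh, Real.cosh_eq, Real.exp_log hpos, ← Real.log_inv, Real.exp_log (by positivity)]
  have hinv : (x + Real.sqrt (x ^ 2 - 1))⁻¹ = x - Real.sqrt (x ^ 2 - 1) := by
    apply inv_eq_of_mul_eq_one_right
    nlinarith
  rw [hinv]; ring

lemma arcosh_le {x y : ℝ} (hx : 1 ≤ x) (hy : 0 ≤ y) (h : x ≤ Real.cosh y) :
    arcosh x ≤ y := by
  have hsn : 0 ≤ Real.sqrt (x ^ 2 - 1) := Real.sqrt_nonneg _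
  have hcy : 1 ≤ Real.cosh y := Real.one_le_cosh y
  have hsy : 0 ≤ Real.sinh y := Real.sinh_nonneg_iff.mpr hy
  have key : Real.sqrt (x ^ 2 - 1) ≤ Real.sinh y := by
    rw [show Real.sinh y = Real.sqrt (Real.sinh y ^ 2) from (Real.sqrt_sq hsy).symm]
    apply Real.sqrt_le_sqrt
    have := Real.cosh_sq y
    nlinarith
  calc arcosh x ≤ Real.log (Real.cosh y + Real.sinh y) := by
        apply Real.log_le_log (by linarith)
        linarith
    _ = y := by rw [Real.cosh_add_sinh, Real.log_exp]

lemma sinh_superhom {γ t : ℝ} (hγ : 1 ≤ γ) (ht : 0 ≤ t) :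
    γ * Real.sinh t ≤ Real.sinh (γ * t) := by
  set g : ℝ → ℝ := fun s => Real.sinh (γ * s) - γ * Real.sinh s with hg
  have hd : ∀ s : ℝ, HasDerivAt g (γ * Real.cosh (γ * s) - γ * Real.cosh s) s := by
    intro s
    have h1 : HasDerivAt (fun s : ℝ => Real.sinh (γ * s)) (Real.cosh (γ * s) * γ) s := by
      exact (Real.hasDerivAt_sinh (γ * s)).comp s (by simpa using (hasDerivAt_id s).const_mul γ)
    have h2 : HasDerivAt (fun s : ℝ => γ * Real.sinh s) (γ * Real.cosh s) s :=
      (Real.hasDerivAt_sinh s).const_mul γ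
    have := h1.sub h2
    rw [mul_comm (Real.cosh (γ * s)) γ] at this
    exact this
  have hmono : MonotoneOn g (Set.Ici (0:ℝ)) := by
    apply monotoneOn_of_deriv_nonneg (convex_Ici 0)
    · exact (Continuous.sub (Real.continuous_sinh.comp (continuous_const.mul continuous_id))
        (continuous_const.mul Real.continuous_sinh)).continuousOn
    · intro s _
      exact (hd s).differentiableAt.differentiableWithinAt
    · intro s hs
      rw [(hd s).deriv]
      have hs0 : 0 ≤ s := le_of_lt (by simpa using hs)
      have : Real.cosh s ≤ Real.cosh (γ * s) := by
        rw [Real.cosh_le_cosh, abs_of_nonneg hs0, abs_of_nonneg (by nlinarith)]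
        nlinarith
      nlinarith
  have h0 : g 0 ≤ g t := hmono (Set.self_mem_Ici) ht ht
  simp only [hg, mul_zero, Real.sinh_zero, sub_zero] at h0
  linarith [h0]

lemma cosh_mul_ge {γ a : ℝ} (hγ : 1 ≤ γ) (ha : 0 ≤ a) :
    1 + γ ^ 2 * (Real.cosh a - 1) ≤ Real.cosh (γ * a) := by
  have h2 : Real.cosh a = 2 * Real.sinh (a / 2) ^ 2 + 1 := by
    have := Real.cosh_two_mul (a / 2)
    have hs := Real.cosh_sq (a / 2)
    rw [show 2 * (a / 2) = a by ring] at this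
    nlinarith
  have h3 : Real.cosh (γ * a) = 2 * Real.sinh (γ * (a / 2)) ^ 2 + 1 := by
    have := Real.cosh_two_mul (γ * (a / 2))
    have hs := Real.cosh_sq (γ * (a / 2))
    rw [show 2 * (γ * (a / 2)) = γ * a by ring] at this
    nlinarith
  have hsup := sinh_superhom hγ (by linarith : (0:ℝ) ≤ a / 2)
  have hsn : 0 ≤ Real.sinh (a / 2) := Real.sinh_nonneg_iff.mpr (by linarith)
  have hsq : (γ * Real.sinh (a / 2)) ^ 2 ≤ Real.sinh (γ * (a / 2)) ^ 2 :=
    pow_le_pow_left₀ (mul_nonneg (by linarith) hsn) hsup 2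
  nlinarith [hsq]

/-- Lemma 3.3 (1): for `γ ≥ 1`, `F_{z₁,z₂}(γ·r) ≤ γ·F_{z₁,z₂}(r)`. -/
theorem F_scale_ge_one (z₁ z₂ : ℝ) (hz₁ : 0 < z₁) (hz₂ : 0 < z₂)
    (γ : ℝ) (hγ : 1 ≤ γ) (r : ℝ) (hr : 0 ≤ r) :
    F z₁ z₂ (γ * r) ≤ γ * F z₁ z₂ r := by
  have hc : (0:ℝ) < 2 * z₁ * z₂ := by positivity
  have hu0 : (0:ℝ) ≤ (r ^ 2 + (z₁ - z₂) ^ 2) / (2 * z₁ * z₂) := by positivity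
  have ha0 : 0 ≤ F z₁ z₂ r := arcosh_nonneg (by linarith)
  have hcosh : Real.cosh (F z₁ z₂ r) = 1 + (r ^ 2 + (z₁ - z₂) ^ 2) / (2 * z₁ * z₂) :=
    cosh_arcosh (by linarith)
  have hv0 : (0:ℝ) ≤ ((γ * r) ^ 2 + (z₁ - z₂) ^ 2) / (2 * z₁ * z₂) := by positivity
  apply arcosh_le (by linarith) (by positivity)
  have hkey := cosh_mul_ge hγ ha0
  rw [hcosh] at hkey
  have hle : ((γ * r) ^ 2 + (z₁ - z₂) ^ 2) / (2 * z₁ * z₂) ≤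
      γ ^ 2 * ((r ^ 2 + (z₁ - z₂) ^ 2) / (2 * z₁ * z₂)) := by
    rw [← mul_div_assoc, div_le_div_iff_of_pos_right hc]
    nlinarith [mul_nonneg (show (0:ℝ) ≤ γ ^ 2 - 1 by nlinarith) (sq_nonneg (z₁ - z₂))]
  calc 1 + ((γ * r) ^ 2 + (z₁ - z₂) ^ 2) / (2 * z₁ * z₂)
      ≤ 1 + γ ^ 2 * ((r ^ 2 + (z₁ - z₂) ^ 2) / (2 * z₁ * z₂)) := by linarith
    _ ≤ Real.cosh (γ * F z₁ z₂ r) := by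
        have heq : γ ^ 2 * ((r ^ 2 + (z₁ - z₂) ^ 2) / (2 * z₁ * z₂)) =
            γ ^ 2 * (1 + (r ^ 2 + (z₁ - z₂) ^ 2) / (2 * z₁ * z₂) - 1) := by ring
        rw [heq]; exact hkey
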